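/- arXiv:1905.11183 — 3 statements merged into one kernel-verified Lean document; each statement's English description precedes it below -/
import Mathlib

section
/- For all positive integers i and j, the sum of μ*(d) over unitary divisors d of j such that i is a unitary divisor of j/d equals 1 if i = j and 0 otherwise. -/
/-- `d` is a unitary divisor of `j`: `d ∣ j` and `gcd(d, j/d) = 1`. -/
def UnitaryDvd (d j : ℕ) : Prop := d ∣ j ∧ Nat.Coprime d (j / d)

instance : ∀ d j, Decidable (UnitaryDvd d j) := fun _ _ => instDecidableAnd

/-- The unitary Möbius function `μ*(n) = (-1)^{ω(n)}`. -/
noncomputable def mustar (n : ℕ) : ℤ := (-1) ^ n.primeFactors.card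

lemma prod_pow_primeFactors_self {n : ℕ} (hn : n ≠ 0) :
    ∏ p ∈ n.primeFactors, p ^ n.factorization p = n := by
  rw [← Nat.support_factorization]
  exact Nat.factorization_prod_pow_eq_self hn

lemma primeFactors_prod_pow {S : Finset ℕ} {e : ℕ → ℕ}
    (h : ∀ p ∈ S, p.Prime ∧ e p ≠ 0) :
    (∏ p ∈ S, p ^ e p).primeFactors = S := by
  induction S using Finset.induction with
  | empty => simp
  | @insert p S hp ih =>
    have hpp := (h p (Finset.mem_insert_self p S)).1
    have hep := (h p (Finset.mem_insert_self p S)).2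
    have hne : ∏ q ∈ S, q ^ e q ≠ 0 := by
      rw [Finset.prod_ne_zero_iff]
      exact fun q hq => pow_ne_zero _ (h q (Finset.mem_insert_of_mem hq)).1.pos.ne'
    rw [Finset.prod_insert hp, Nat.primeFactors_mul (pow_ne_zero _ hpp.pos.ne') hne,
      Nat.primeFactors_prime_pow hep hpp,
      ih (fun q hq => h q (Finset.mem_insert_of_mem hq)), Finset.insert_eq]

lemma unitary_of_subset {n : ℕ} (hn : n ≠ 0) {S : Finset ℕ} (hS : S ⊆ n.primeFactors) :
    UnitaryDvd (∏ p ∈ S, p ^ n.factorization p) n := by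
  set d := ∏ p ∈ S, p ^ n.factorization p with hd
  set m := ∏ p ∈ n.primeFactors \ S, p ^ n.factorization p with hm
  have hdm : d * m = n := by
    rw [hd, hm, mul_comm, Finset.prod_sdiff hS]
    exact prod_pow_primeFactors_self hn
  have hd0 : d ≠ 0 := by
    rw [hd, Finset.prod_ne_zero_iff]
    exact fun q hq => pow_ne_zero _ (Nat.prime_of_mem_primeFactors (hS hq)).pos.ne'
  have hco : Nat.Coprime d m := by
    apply Nat.Coprime.prod_left
    intro p hp
    apply Nat.Coprime.prod_right
    intro q hq
    have hpq : p ≠ q := fun h => (Finset.mem_sdiff.1 hq).2 (h ▸ hp)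
    exact Nat.Coprime.pow _ _
      ((Nat.coprime_primes (Nat.prime_of_mem_primeFactors (hS hp))
        (Nat.prime_of_mem_primeFactors (Finset.mem_sdiff.1 hq).1)).2 hpq)
  have hdvd : d ∣ n := hdm ▸ Dvd.intro_left m (by ring)
  have : n / d = m := by
    rw [← hdm, Nat.mul_div_cancel_left _ (Nat.pos_of_ne_zero hd0)]
  exact ⟨hdvd, this ▸ hco⟩

lemma eq_prod_of_unitary {n d : ℕ} (hn : n ≠ 0) (h : UnitaryDvd d n) :
    d = ∏ p ∈ d.primeFactors, p ^ n.factorization p := by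
  obtain ⟨hdvd, hco⟩ := h
  have hd0 : d ≠ 0 := fun h => by simp [h, Nat.eq_zero_of_zero_dvd] at hdvd; exact hn hdvd
  nth_rewrite 1 [← prod_pow_primeFactors_self hd0]
  apply Finset.prod_congr rfl
  intro p hp
  have hnd0 : n / d ≠ 0 := Nat.div_ne_zero_iff_of_dvd hdvd |>.2 ⟨hn, hd0⟩
  have hfac : n.factorization = d.factorization + (n / d).factorization := by
    rw [← Nat.factorization_mul hd0 hnd0, Nat.mul_div_cancel' hdvd]
  have hz : (n / d).factorization p = 0 := by
    apply Nat.factorization_eq_zero_of_not_dvd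
    intro hpd
    have : p ∣ Nat.gcd d (n / d) :=
      Nat.dvd_gcd (Nat.dvd_of_mem_primeFactors hp) hpd
    rw [hco] at this
    exact (Nat.prime_of_mem_primeFactors hp).ne_one (Nat.eq_one_of_dvd_one this)
  rw [hfac]
  simp [hz]

lemma sum_mustar_unitary_aux (n : ℕ) (hn : 0 < n) :
    ∑ d ∈ (Nat.divisors n).filter (fun d => UnitaryDvd d n), mustar d
      = if n = 1 then 1 else 0 := by
  have key : ∑ d ∈ (Nat.divisors n).filter (fun d => UnitaryDvd d n), mustar d
      = ∑ S ∈ n.primeFactors.powerset, (-1 : ℤ) ^ S.card := by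
    apply Finset.sum_bij' (fun d _ => d.primeFactors)
      (fun S _ => ∏ p ∈ S, p ^ n.factorization p)
    · intro d hd
      rw [Finset.mem_powerset]
      exact Nat.primeFactors_mono (Nat.dvd_of_mem_divisors (Finset.mem_filter.1 hd).1) hn.ne'
    · intro S hS
      rw [Finset.mem_powerset] at hS
      have hu := unitary_of_subset hn.ne' hS
      exact Finset.mem_filter.2 ⟨Nat.mem_divisors.2 ⟨hu.1, hn.ne'⟩, hu⟩
    · intro d hd
      exact (eq_prod_of_unitary hn.ne' (Finset.mem_filter.1 hd).2).symm
    · intro S hS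
      rw [Finset.mem_powerset] at hS
      exact primeFactors_prod_pow (fun p hp => ⟨Nat.prime_of_mem_primeFactors (hS hp),
        (Nat.Prime.factorization_pos_of_dvd (Nat.prime_of_mem_primeFactors (hS hp)) hn.ne'
          (Nat.dvd_of_mem_primeFactors (hS hp))).ne'⟩)
    · intro d _
      rfl
  rw [key, Finset.sum_powerset_neg_one_pow_card]
  congr 1
  rw [Nat.primeFactors_eq_empty]
  simp [hn.ne']

theorem sum_mustar_unitary (i j : ℕ) (hi : 0 < i) (hj : 0 < j) :
    ∑ d ∈ (Nat.divisors j).filter (fun d => UnitaryDvd d j ∧ UnitaryDvd i (j / d)),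
      mustar d = if i = j then 1 else 0 := by
  by_cases hu : UnitaryDvd i j
  · obtain ⟨hdvd, hco⟩ := hu
    set n := j / i with hn
    have hn0 : 0 < n := Nat.div_pos (Nat.le_of_dvd hj hdvd) hi
    have hji : j = i * n := (Nat.mul_div_cancel' hdvd).symm
    have hset : (Nat.divisors j).filter (fun d => UnitaryDvd d j ∧ UnitaryDvd i (j / d))
        = (Nat.divisors n).filter (fun d => UnitaryDvd d n) := by
      ext d
      simp only [Finset.mem_filter, Nat.mem_divisors]
      simp only [UnitaryDvd]
      constructor
      · rintro ⟨⟨hdj, -⟩, ⟨-, hcod⟩, hiu, hcoi⟩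
        have hdi : Nat.Coprime d i := Nat.Coprime.coprime_dvd_right hiu hcod
        have hdn : d ∣ n := by
          rw [hn, Nat.dvd_div_iff_mul_dvd hdvd]
          exact Nat.Coprime.mul_dvd_of_dvd_of_dvd hdi.symm hdvd hdj
        have hndd : n / d ∣ j / d := by
          rw [hn, Nat.div_div_eq_div_mul, mul_comm i d, ← Nat.div_div_eq_div_mul]
          exact Nat.div_dvd_of_dvd hiu
        exact ⟨⟨hdn, hn0.ne'⟩, hdn, Nat.Coprime.coprime_dvd_right hndd hcod⟩
      · rintro ⟨⟨hdn, -⟩, -, hcod⟩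
        have hd0 : 0 < d := Nat.pos_of_dvd_of_pos hdn hn0
        have hdi : Nat.Coprime d i := Nat.Coprime.coprime_dvd_left hdn hco.symm
        have hjd : j / d = i * (n / d) := by
          have h1 : j = d * (i * (n / d)) := by
            rw [hji]
            nth_rewrite 1 [← Nat.mul_div_cancel' hdn]
            ring
          rw [h1, Nat.mul_div_cancel_left _ hd0]
        have hdj : d ∣ j := hdn.trans ⟨i, by rw [hji]; ring⟩
        refine ⟨⟨hdj, hj.ne'⟩, ⟨hdj, ?_⟩, ?_, ?_⟩
        · rw [hjd]
          exact Nat.Coprime.mul_right hdi hcod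
        · rw [hjd]; exact dvd_mul_right i _
        · rw [hjd, Nat.mul_div_cancel_left _ hi]
          exact Nat.Coprime.coprime_dvd_right (Nat.div_dvd_of_dvd hdn) hco
    rw [hset, sum_mustar_unitary_aux n hn0]
    congr 1
    simp only [eq_iff_iff]
    constructor
    · intro h
      rw [hji, h, mul_one]
    · rintro rfl
      rw [hn, Nat.div_self hj]
  · have hij : i ≠ j := by
      rintro rfl
      exact hu ⟨dvd_refl i, by rw [Nat.div_self hi]; exact Nat.coprime_one_right i⟩
    rw [if_neg hij]
    apply Finset.sum_eq_zero
    intro d hd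
    exfalso
    obtain ⟨hd1, ⟨hdj, hcod⟩, hiu, hcoi⟩ := Finset.mem_filter.1 hd
    apply hu
    have hd0 : 0 < d := Nat.pos_of_mem_divisors hd1
    have hdi : Nat.Coprime d i := Nat.Coprime.coprime_dvd_right hiu hcod
    have hji2 : j / i = d * (j / d / i) := by
      have h1 : j = i * (d * (j / d / i)) := by
        nth_rewrite 1 [← Nat.mul_div_cancel' hdj, ← Nat.mul_div_cancel' hiu]
        ring
      conv_lhs => rw [h1]
      rw [Nat.mul_div_cancel_left _ hi]
    refine ⟨hiu.trans (Nat.div_dvd_of_dvd hdj), ?_⟩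
    rw [hji2]
    exact Nat.Coprime.mul_right hdi.symm hcoi
end

section
/- For n ≥ 2, the matrix R*_n factors as R*_n = S_n T_n, where R*_n, S_n, T_n are the n×n matrices defined by: (R*_n)_{ij} = 1 if i ∥ j or j = 1, else 0; (S_n)_{ij} = 1 if i ∥ j, else 0; (T_n)_{i1} = M*(n/i, i), (T_n)_{ii} = 1 for i ≥ 2, and (T_n)_{ij} = 0 otherwise. -/
/-- `M*(x, k) = ∑_{d ≤ x, gcd(d,k)=1} μ*(d)`. -/
noncomputable def Mstar (x k : ℕ) : ℤ :=
  ∑ d ∈ (Finset.Icc 1 x).filter (fun d => Nat.Coprime d k), mustar d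

open Finset

/-- Auxiliary: the unitary divisor of `b` associated to a set of primes `S`. -/
def Dfun (b : ℕ) (S : Finset ℕ) : ℕ := ∏ p ∈ S, p ^ b.factorization p

lemma Dfun_ne_zero {b : ℕ} {S : Finset ℕ} (hS : S ⊆ b.primeFactors) : Dfun b S ≠ 0 := by
  refine Finset.prod_ne_zero_iff.mpr fun p hp => ?_
  exact pow_ne_zero _ (Nat.Prime.ne_zero (Nat.prime_of_mem_primeFactors (hS hp)))

lemma primeFactors_Dfun {b : ℕ} : ∀ {S : Finset ℕ}, S ⊆ b.primeFactors →
    (Dfun b S).primeFactors = S := by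
  intro S
  induction S using Finset.induction_on with
  | empty => intro _; simp [Dfun]
  | @insert p S hp ih =>
    intro hS
    have hpb : p ∈ b.primeFactors := hS (mem_insert_self _ _)
    have hSb : S ⊆ b.primeFactors := (Finset.subset_insert p S).trans hS
    have hppr : p.Prime := Nat.prime_of_mem_primeFactors hpb
    have hvp : b.factorization p ≠ 0 := by
      have := (Nat.support_factorization b) ▸ hpb
      exact Finsupp.mem_support_iff.mp this
    have h1 : Dfun b (insert p S) = p ^ b.factorization p * Dfun b S := by
      rw [Dfun, Finset.prod_insert hp]; rfl
    rw [h1, Nat.primeFactors_mul (pow_ne_zero _ hppr.ne_zero) (Dfun_ne_zero hSb),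
      Nat.primeFactors_prime_pow hvp hppr, ih hSb]
    ext q; simp [or_comm]

lemma coprime_Dfun {b : ℕ} {S T : Finset ℕ} (hS : S ⊆ b.primeFactors) (hT : T ⊆ b.primeFactors)
    (hd : Disjoint S T) : Nat.Coprime (Dfun b S) (Dfun b T) := by
  refine Nat.Coprime.prod_left fun p hp => Nat.Coprime.prod_right fun q hq => ?_
  have hpq : p ≠ q := fun h => (Finset.disjoint_left.mp hd hp) (h ▸ hq)
  exact Nat.Coprime.pow _ _ ((Nat.coprime_primes (Nat.prime_of_mem_primeFactors (hS hp))
    (Nat.prime_of_mem_primeFactors (hT hq))).mpr hpq)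

lemma Dfun_mul_compl {b : ℕ} (hb : b ≠ 0) {S : Finset ℕ} (hS : S ⊆ b.primeFactors) :
    Dfun b S * Dfun b (b.primeFactors \ S) = b := by
  rw [Dfun, Dfun, ← Finset.prod_union (Finset.disjoint_sdiff),
    Finset.union_sdiff_of_subset hS]
  have := Nat.factorization_prod_pow_eq_self hb
  rw [Finsupp.prod] at this
  exact this

lemma unitaryDvd_Dfun {b : ℕ} (hb : b ≠ 0) {S : Finset ℕ} (hS : S ⊆ b.primeFactors) :
    UnitaryDvd (Dfun b S) b := by
  have hmul := Dfun_mul_compl hb hS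
  have hdvd : Dfun b S ∣ b := ⟨Dfun b (b.primeFactors \ S), hmul.symm⟩
  refine ⟨hdvd, ?_⟩
  have h0 : 0 < Dfun b S := Nat.pos_of_ne_zero (Dfun_ne_zero hS)
  have hdiv : b / Dfun b S = Dfun b (b.primeFactors \ S) :=
    Nat.div_eq_of_eq_mul_left h0 ((mul_comm _ _).trans hmul).symm
  rw [hdiv]
  exact coprime_Dfun hS (Finset.sdiff_subset) Finset.disjoint_sdiff

lemma Dfun_primeFactors_eq {b d : ℕ} (hb : b ≠ 0) (hd : d ∣ b)
    (hcop : Nat.Coprime d (b / d)) : Dfun b d.primeFactors = d := by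
  have hd0 : d ≠ 0 := fun h => hb (by simpa [h] using hd)
  have key : ∀ p ∈ d.primeFactors, b.factorization p = d.factorization p := by
    intro p hp
    have hppr : p.Prime := Nat.prime_of_mem_primeFactors hp
    have hbd : b = d * (b / d) := (Nat.mul_div_cancel' hd).symm
    have hbd0 : b / d ≠ 0 := fun h => hb (by rw [hbd, h, mul_zero])
    have hpnd : ¬ p ∣ (b / d) := by
      intro hpd
      have : p ∣ Nat.gcd d (b / d) := Nat.dvd_gcd (Nat.dvd_of_mem_primeFactors hp) hpd
      rw [hcop] at this
      exact hppr.one_lt.ne' (Nat.dvd_one.mp this)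
    rw [hbd, Nat.factorization_mul hd0 hbd0]
    simp [Nat.factorization_eq_zero_of_not_dvd hpnd]
  have : Dfun b d.primeFactors = ∏ p ∈ d.primeFactors, p ^ d.factorization p := by
    exact Finset.prod_congr rfl fun p hp => by rw [key p hp]
  rw [this]
  have := Nat.factorization_prod_pow_eq_self hd0
  rw [Finsupp.prod] at this
  exact this

/-- Sum of `μ*` over the unitary divisors of `b`. -/
lemma sum_unitary (b : ℕ) (hb : b ≠ 0) :
    ∑ d ∈ b.divisors.filter (fun d => UnitaryDvd d b), mustar d
      = if b = 1 then 1 else 0 := by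
  classical
  have hsum : ∑ d ∈ b.divisors.filter (fun d => UnitaryDvd d b), mustar d
      = ∑ S ∈ b.primeFactors.powerset, (-1 : ℤ) ^ S.card := by
    refine Finset.sum_nbij' (fun d => d.primeFactors) (fun S => Dfun b S) ?_ ?_ ?_ ?_ ?_
    · intro d hd
      rw [Finset.mem_filter, Nat.mem_divisors] at hd
      exact Finset.mem_powerset.mpr (Nat.primeFactors_mono hd.1.1 hb)
    · intro S hS
      rw [Finset.mem_powerset] at hS
      rw [Finset.mem_filter, Nat.mem_divisors]
      exact ⟨⟨(unitaryDvd_Dfun hb hS).1, hb⟩, unitaryDvd_Dfun hb hS⟩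
    · intro d hd
      rw [Finset.mem_filter, Nat.mem_divisors] at hd
      exact Dfun_primeFactors_eq hb hd.2.1 hd.2.2
    · intro S hS
      exact primeFactors_Dfun (Finset.mem_powerset.mp hS)
    · intro d _; rfl
  rw [hsum, Finset.sum_powerset_neg_one_pow_card]
  congr 1
  simp only [eq_iff_iff]
  rw [Nat.primeFactors_eq_empty]
  constructor
  · rintro (h | h)
    · exact absurd h hb
    · exact h
  · exact fun h => Or.inr h

lemma unitaryDvd_self {a : ℕ} (ha : 0 < a) : UnitaryDvd a a :=
  ⟨dvd_rfl, by rw [Nat.div_self ha]; exact Nat.coprime_one_right a⟩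

/-- The key identity: for `1 ≤ a ≤ n`, `∑_{a ∥ m ≤ n} M*(n/m, m) = 1`. -/
lemma key_sum (n a : ℕ) (ha : 1 ≤ a) (han : a ≤ n) :
    ∑ m ∈ (Finset.Icc 1 n).filter (fun m => UnitaryDvd a m), Mstar (n / m) m = 1 := by
  classical
  have step1 :
      ∑ m ∈ (Finset.Icc 1 n).filter (fun m => UnitaryDvd a m), Mstar (n / m) m
        = ∑ N ∈ (Finset.Icc 1 n).filter (fun N => UnitaryDvd a N),
            ∑ d ∈ (N / a).divisors.filter (fun d => UnitaryDvd d (N / a)), mustar d := by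
    simp only [Mstar]
    rw [Finset.sum_sigma', Finset.sum_sigma']
    refine Finset.sum_nbij' (fun p => ⟨p.1 * p.2, p.2⟩) (fun p => ⟨p.1 / p.2, p.2⟩)
      ?_ ?_ ?_ ?_ ?_
    · rintro ⟨m, d⟩ hp
      dsimp only at hp ⊢
      rw [Finset.mem_sigma, Finset.mem_filter, Finset.mem_filter,
        Finset.mem_Icc, Finset.mem_Icc] at hp
      obtain ⟨⟨⟨hm1, hmn⟩, hadm, hacop⟩, ⟨hd1, hdn⟩, hcd⟩ := hp
      have hm0 : 0 < m := hm1
      have hd0 : 0 < d := hd1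
      have hmdn : m * d ≤ n := by
        rw [mul_comm]
        exact (Nat.le_div_iff_mul_le hm0).mp hdn
      have hdiv : m * d / a = d * (m / a) := by
        rw [mul_comm m d, Nat.mul_div_assoc d hadm]
      have hcad : Nat.Coprime a d := (Nat.Coprime.coprime_dvd_right hadm hcd).symm
      rw [Finset.mem_sigma, Finset.mem_filter, Finset.mem_Icc]
      refine ⟨⟨⟨Nat.one_le_iff_ne_zero.mpr (by positivity), hmdn⟩,
        dvd_mul_of_dvd_left hadm d, ?_⟩, ?_⟩
      · rw [hdiv]
        exact Nat.Coprime.mul_right hcad hacop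
      · rw [Finset.mem_filter, Nat.mem_divisors, hdiv]
        have hma : 0 < m / a := Nat.div_pos (Nat.le_of_dvd hm0 hadm) ha
        refine ⟨⟨dvd_mul_right d (m / a), by positivity⟩, dvd_mul_right d (m / a), ?_⟩
        rw [Nat.mul_div_cancel_left _ hd0]
        exact Nat.Coprime.coprime_dvd_right (Nat.div_dvd_of_dvd hadm) hcd
    · rintro ⟨N, d⟩ hp
      dsimp only at hp ⊢
      rw [Finset.mem_sigma, Finset.mem_filter, Finset.mem_filter,
        Finset.mem_Icc, Nat.mem_divisors] at hp
      obtain ⟨⟨⟨hN1, hNn⟩, hadN, hacop⟩, ⟨hdNa, hNa0⟩, hddvd, hdcop⟩ := hp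
      have hd0 : 0 < d := Nat.pos_of_ne_zero (fun h => hNa0 (by simpa [h] using hdNa))
      have hdN : d ∣ N := hdNa.trans (Nat.div_dvd_of_dvd hadN)
      have hN0 : 0 < N := hN1
      have hNd0 : 0 < N / d := Nat.div_pos (Nat.le_of_dvd hN0 hdN) hd0
      have hNdm : N / d * d = N := Nat.div_mul_cancel hdN
      have hcad : Nat.Coprime a d := Nat.Coprime.coprime_dvd_right hdNa hacop
      have haNd : a ∣ N / d := by
        refine (Nat.Coprime.dvd_of_dvd_mul_right hcad) ?_
        rw [hNdm]; exact hadN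
      rw [Finset.mem_sigma, Finset.mem_filter, Finset.mem_filter,
        Finset.mem_Icc, Finset.mem_Icc]
      refine ⟨⟨⟨hNd0, (Nat.div_le_self N d).trans hNn⟩, haNd, ?_⟩, ⟨hd0, ?_⟩, ?_⟩
      · have : N / d / a = N / a / d := by
          rw [Nat.div_div_eq_div_mul, Nat.div_div_eq_div_mul, mul_comm]
        rw [this]
        exact Nat.Coprime.coprime_dvd_right (Nat.div_dvd_of_dvd hdNa) hacop
      · rw [Nat.le_div_iff_mul_le hNd0, mul_comm, hNdm]
        exact hNn
      · have hsplit : N / d = a * (N / a / d) := by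
          rw [← Nat.mul_div_assoc a hdNa, Nat.mul_div_cancel' hadN]
        rw [hsplit]
        exact Nat.Coprime.mul_right hcad.symm hdcop
    · rintro ⟨m, d⟩ hp
      dsimp only at hp ⊢
      rw [Finset.mem_sigma, Finset.mem_filter, Finset.mem_filter,
        Finset.mem_Icc, Finset.mem_Icc] at hp
      have hd0 : 0 < d := hp.2.1.1
      have hmd : m * d / d = m := by
        rw [Nat.mul_div_assoc m dvd_rfl, Nat.div_self hd0, mul_one]
      simp [hmd]
    · rintro ⟨N, d⟩ hp
      dsimp only at hp ⊢
      rw [Finset.mem_sigma, Finset.mem_filter, Finset.mem_filter,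
        Finset.mem_Icc, Nat.mem_divisors] at hp
      obtain ⟨⟨⟨hN1, hNn⟩, hadN, hacop⟩, ⟨hdNa, hNa0⟩, hddvd, hdcop⟩ := hp
      have hd0 : 0 < d := Nat.pos_of_ne_zero (fun h => hNa0 (by simpa [h] using hdNa))
      have hdN : d ∣ N := hdNa.trans (Nat.div_dvd_of_dvd hadN)
      simp [Nat.div_mul_cancel hdN]
    · rintro ⟨m, d⟩ _; rfl
  rw [step1]
  have step2 : ∀ N ∈ (Finset.Icc 1 n).filter (fun N => UnitaryDvd a N),
      (∑ d ∈ (N / a).divisors.filter (fun d => UnitaryDvd d (N / a)), mustar d)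
        = if N = a then 1 else 0 := by
    intro N hN
    rw [Finset.mem_filter, Finset.mem_Icc] at hN
    obtain ⟨⟨hN1, hNn⟩, hadN, hacop⟩ := hN
    have hNa : 0 < N / a := Nat.div_pos (Nat.le_of_dvd hN1 hadN) ha
    rw [sum_unitary _ hNa.ne']
    congr 1
    simp only [eq_iff_iff]
    constructor
    · intro h
      have hNe : N = a * (N / a) := (Nat.mul_div_cancel' hadN).symm
      rw [h, mul_one] at hNe
      exact hNe
    · rintro rfl
      exact Nat.div_self ha
  rw [Finset.sum_congr rfl step2, Finset.sum_ite_eq' _ a (fun _ => (1 : ℤ))]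
  rw [if_pos]
  rw [Finset.mem_filter, Finset.mem_Icc]
  exact ⟨⟨ha, han⟩, unitaryDvd_self ha⟩

theorem redheffer_star_factorization (n : ℕ) (hn : 2 ≤ n) :
    (Matrix.of fun i j : Fin n =>
        if UnitaryDvd ((i : ℕ) + 1) ((j : ℕ) + 1) ∨ (j : ℕ) + 1 = 1 then (1 : ℤ) else 0) =
      (Matrix.of fun i j : Fin n =>
          if UnitaryDvd ((i : ℕ) + 1) ((j : ℕ) + 1) then (1 : ℤ) else 0) *
        (Matrix.of fun i j : Fin n =>
          if (j : ℕ) = 0 then Mstar (n / ((i : ℕ) + 1)) ((i : ℕ) + 1)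
          else if i = j then 1 else 0) := by
  ext i j
  rw [Matrix.mul_apply]
  simp only [Matrix.of_apply]
  by_cases hj : (j : ℕ) = 0
  · rw [if_pos (Or.inr (by omega))]
    simp only [hj, if_pos rfl, ite_true, eq_self_iff_true]
    have h1 : ∀ k : Fin n,
        (if UnitaryDvd ((i : ℕ) + 1) ((k : ℕ) + 1) then (1:ℤ) else 0) *
          Mstar (n / ((k : ℕ) + 1)) ((k : ℕ) + 1)
        = (fun m => if UnitaryDvd ((i : ℕ) + 1) m then Mstar (n / m) m else 0) ((k : ℕ) + 1) := by
      intro k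
      by_cases h : UnitaryDvd ((i : ℕ) + 1) ((k : ℕ) + 1) <;> simp [h]
    rw [Finset.sum_congr rfl (fun k _ => h1 k),
      Fin.sum_univ_eq_sum_range
        (fun k => (fun m => if UnitaryDvd ((i : ℕ) + 1) m then Mstar (n / m) m else 0) (k + 1)) n]
    have h2 : ∑ k ∈ Finset.range n,
        (fun m => if UnitaryDvd ((i : ℕ) + 1) m then Mstar (n / m) m else 0) (k + 1)
        = ∑ m ∈ Finset.Icc 1 n,
            (if UnitaryDvd ((i : ℕ) + 1) m then Mstar (n / m) m else 0) := by
      rw [← Finset.Ico_add_one_right_eq_Icc, Finset.sum_Ico_eq_sum_range]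
      simp only [Nat.add_sub_cancel]
      exact Finset.sum_congr rfl fun k _ => by rw [Nat.add_comm 1 k]
    rw [h2, ← Finset.sum_filter]
    exact (key_sum n ((i : ℕ) + 1) (by omega) (by omega : (i : ℕ) + 1 ≤ n)).symm
  · have hj1 : ¬ ((j : ℕ) + 1 = 1) := by omega
    simp only [hj, if_neg hj, ite_false, mul_ite, mul_one, mul_zero]
    rw [Finset.sum_ite_eq' Finset.univ j
      (fun k => if UnitaryDvd ((i : ℕ) + 1) ((k : ℕ) + 1) then (1:ℤ) else 0),
      if_pos (Finset.mem_univ j)]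
    exact if_congr (or_iff_left hj1) rfl rfl
end

section
/- Define k_1 = 0 and k_n = max(k_{n-1}, ω(n)+1) for n ≥ 2. For n ≥ 2, k_n is the unique positive integer such that N_{k_n - 1} ≤ n < N_{k_n}, where N_k = p_1 p_2 ⋯ p_k is the product of the first k primes (the k-th primorial), with N_0 = 1. -/
/-- The sequence `k_1 = 0`, `k_n = max (k_{n-1}) (ω(n) + 1)` for `n ≥ 2`. -/
def kseq : ℕ → ℕ
  | 0 => 0
  | 1 => 0
  | n + 2 => max (kseq (n + 1)) ((n + 2).primeFactors.card + 1)

/-- `N_k`, the product of the first `k` primes (the `k`-th primorial), `N_0 = 1`. -/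
noncomputable def primorialSeq (k : ℕ) : ℕ := ∏ i ∈ Finset.range k, Nat.nth Nat.Prime i

lemma primorialSeq_pos (k : ℕ) : 0 < primorialSeq k :=
  Finset.prod_pos fun i _ => (Nat.prime_nth_prime i).pos

lemma primorialSeq_mono : Monotone primorialSeq := by
  intro a b hab
  exact Finset.prod_le_prod_of_subset_of_one_le' (Finset.range_subset_range.2 hab)
    (fun i _ _ => (Nat.prime_nth_prime i).one_lt.le)

lemma prod_primes_ge (s : Finset ℕ) (hs : ∀ p ∈ s, p.Prime) :
    primorialSeq s.card ≤ ∏ p ∈ s, p := by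
  induction s using Finset.strongInduction with
  | _ s ih =>
    rcases s.eq_empty_or_nonempty with rfl | hne
    · simp [primorialSeq]
    · set q := s.max' hne with hq
      have hqs : q ∈ s := s.max'_mem hne
      have ih' := ih _ (Finset.erase_ssubset hqs)
        (fun p hp => hs p (Finset.mem_of_mem_erase hp))
      have hcount : (s.erase q).card ≤ Nat.count Nat.Prime q := by
        rw [Nat.count_eq_card_filter_range]
        apply Finset.card_le_card
        intro p hp
        simp only [Finset.mem_filter, Finset.mem_range]
        exact ⟨lt_of_le_of_ne (s.le_max' p (Finset.mem_of_mem_erase hp))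
          (Finset.ne_of_mem_erase hp), hs p (Finset.mem_of_mem_erase hp)⟩
      have hqn : Nat.nth Nat.Prime ((s.erase q).card) ≤ q := by
        calc Nat.nth Nat.Prime ((s.erase q).card)
            ≤ Nat.nth Nat.Prime (Nat.count Nat.Prime q) :=
              (Nat.nth_le_nth Nat.infinite_setOf_prime).2 hcount
          _ = q := Nat.nth_count (hs q hqs)
      have hcard : s.card = (s.erase q).card + 1 := by
        rw [Finset.card_erase_of_mem hqs]
        have := Finset.card_pos.2 hne
        omega
      rw [hcard, primorialSeq, Finset.prod_range_succ, ← primorialSeq,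
        ← Finset.prod_erase_mul s _ hqs]
      exact Nat.mul_le_mul ih' hqn

lemma primorialSeq_le_self (m : ℕ) (hm : 1 ≤ m) :
    primorialSeq m.primeFactors.card ≤ m :=
  le_trans (prod_primes_ge _ (fun _ hp => Nat.prime_of_mem_primeFactors hp))
    (Nat.le_of_dvd hm (Nat.prod_primeFactors_dvd m))

lemma primeFactors_primorialSeq (k : ℕ) :
    (primorialSeq k).primeFactors = (Finset.range k).image (Nat.nth Nat.Prime) := by
  induction k with
  | zero => simp [primorialSeq]
  | succ k ih =>
    have h1 : primorialSeq (k + 1) = primorialSeq k * Nat.nth Nat.Prime k := by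
      simp [primorialSeq, Finset.prod_range_succ]
    rw [h1, Nat.primeFactors_mul (primorialSeq_pos k).ne' (Nat.prime_nth_prime k).pos.ne',
      ih, (Nat.prime_nth_prime k).primeFactors, Finset.range_add_one, Finset.image_insert]
    ext x
    simp [or_comm]

lemma card_primeFactors_primorialSeq (k : ℕ) :
    (primorialSeq k).primeFactors.card = k := by
  rw [primeFactors_primorialSeq, Finset.card_image_of_injective _
    (Nat.nth_injective Nat.infinite_setOf_prime), Finset.card_range]

lemma kseq_ge (n : ℕ) : ∀ m, 2 ≤ m → m ≤ n → m.primeFactors.card + 1 ≤ kseq n := by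
  induction n with
  | zero => intro m h1 h2; omega
  | succ n ih =>
    intro m h1 h2
    match n, h2 with
    | 0, _ => omega
    | n + 1, h2 =>
      rcases eq_or_lt_of_le h2 with rfl | hlt
      · exact le_max_right _ _
      · exact le_trans (ih m h1 (by omega)) (le_max_left _ _)

lemma kseq_exists (n : ℕ) (hn : 2 ≤ n) :
    ∃ m, 2 ≤ m ∧ m ≤ n ∧ kseq n = m.primeFactors.card + 1 := by
  induction n with
  | zero => omega
  | succ n ih =>
    match n, hn with
    | 1, _ => exact ⟨2, le_refl _, le_refl _, by simp [kseq]⟩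
    | n + 2, _ =>
      obtain ⟨m, hm1, hm2, hm3⟩ := ih (by omega)
      show ∃ m, _ ∧ _ ∧ max (kseq (n + 2)) ((n + 3).primeFactors.card + 1) = _
      rcases max_cases (kseq (n + 2)) ((n + 3).primeFactors.card + 1) with ⟨he, _⟩ | ⟨he, _⟩
      · exact ⟨m, hm1, by omega, by rw [he, hm3]⟩
      · exact ⟨n + 3, by omega, le_refl _, he⟩

theorem kseq_unique_primorial (n : ℕ) (hn : 2 ≤ n) :
    0 < kseq n ∧ primorialSeq (kseq n - 1) ≤ n ∧ n < primorialSeq (kseq n) ∧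
      ∀ k : ℕ, 0 < k → primorialSeq (k - 1) ≤ n → n < primorialSeq k → k = kseq n := by
  have hpos : 0 < kseq n := lt_of_lt_of_le (by omega) (kseq_ge n n hn (le_refl n))
  have hlow : primorialSeq (kseq n - 1) ≤ n := by
    obtain ⟨m, hm1, hm2, hm3⟩ := kseq_exists n hn
    rw [hm3]
    simpa using le_trans (primorialSeq_le_self m (by omega)) hm2
  have hhigh : n < primorialSeq (kseq n) := by
    by_contra h
    push_neg at h
    have h2 : 2 ≤ primorialSeq (kseq n) := by
      calc 2 = primorialSeq 1 := by
            have h0 : Nat.nth Nat.Prime 0 = 2 := Nat.nth_count Nat.prime_two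
            simp [primorialSeq, h0]
        _ ≤ primorialSeq (kseq n) := primorialSeq_mono hpos
    have := kseq_ge n (primorialSeq (kseq n)) h2 h
    rw [card_primeFactors_primorialSeq] at this
    omega
  refine ⟨hpos, hlow, hhigh, fun k hk h1 h2 => ?_⟩
  by_contra hne
  rcases lt_or_gt_of_ne hne with hlt | hgt
  · have : primorialSeq k ≤ primorialSeq (kseq n - 1) := primorialSeq_mono (by omega)
    omega
  · have : primorialSeq (kseq n) ≤ primorialSeq (k - 1) := primorialSeq_mono (by omega)
    omega
end
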